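/- Let G = K_{n,m} be the complete bipartite graph with parts A = {v_1,...,v_n} and B of size m, and let f(v_i) be positive integers for v_i ∈ A and f(u) = n for u ∈ B. If m < ∏_{i=1}^n f(v_i), then G is f-choosable. -/

import Mathlib

/-- A graph `G` with list sizes `f` is `f`-choosable if for every assignment `L` of lists
of colours with `|L v| = f v` for all `v`, there is a proper colouring of `G` choosing
each vertex's colour from its list. -/
def Choosable {V : Type*} (G : SimpleGraph V) (f : V → ℕ) : Prop :=
  ∀ L : V → Finset ℕ, (∀ v, (L v).card = f v) →
    ∃ c : V → ℕ, (∀ v, c v ∈ L v) ∧ ∀ ⦃u v⦄, G.Adj u v → c u ≠ c v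

/-- If `K_{n,m}` has parts `A = {v_1,…,v_n}` and `B` of size `m`, each `v_i` has list size
`f v_i > 0`, each vertex of `B` has list size `n`, and `m < ∏ f v_i`, then `K_{n,m}` is
`f`-choosable. -/
theorem stmt_8 (n m : ℕ) (f : Fin n → ℕ) (hf : ∀ i, 0 < f i)
    (hm : m < ∏ i, f i) :
    Choosable (completeBipartiteGraph (Fin n) (Fin m))
      (Sum.elim f fun _ => n) := by
  intro L hL
  set A : Fin n → Finset ℕ := fun i => L (Sum.inl i) with hA
  have hAcard : ∀ i, (A i).card = f i := fun i => hL (Sum.inl i)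
  have hBcard : ∀ j, (L (Sum.inr j)).card = n := fun j => hL (Sum.inr j)
  have hAne : ∀ i, (A i).Nonempty := fun i =>
    Finset.card_pos.mp (by rw [hAcard i]; exact hf i)
  have key : ∃ cL : Fin n → ℕ, (∀ i, cL i ∈ A i) ∧
      ∀ j : Fin m, ¬ L (Sum.inr j) ⊆ Finset.image cL Finset.univ := by
    by_cases hcase : ∃ i k : Fin n, i ≠ k ∧ (A i ∩ A k).Nonempty
    · obtain ⟨i, k, hik, x, hx⟩ := hcase
      rw [Finset.mem_inter] at hx
      set cL : Fin n → ℕ := fun i' =>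
        if i' = i ∨ i' = k then x else (hAne i').choose with hcLdef
      have hmem : ∀ i', cL i' ∈ A i' := by
        intro i'
        by_cases h : i' = i ∨ i' = k
        · rcases h with h | h <;> subst h <;> simp [hcLdef, hx.1, hx.2]
        · simp only [hcLdef, if_neg h]
          exact (hAne i').choose_spec
      refine ⟨cL, hmem, ?_⟩
      intro j hsub
      have himg : Finset.image cL Finset.univ =
          Finset.image cL (Finset.univ.erase k) := by
        apply Finset.Subset.antisymm
        · intro y hy
          obtain ⟨a, _, ha⟩ := Finset.mem_image.mp hy
          by_cases hak : a = k
          · subst hak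
            have : cL i = cL a := by simp [hcLdef]
            refine Finset.mem_image.mpr ⟨i, Finset.mem_erase.mpr ⟨hik, Finset.mem_univ i⟩, ?_⟩
            rw [← this] at ha; exact ha
          · exact Finset.mem_image.mpr ⟨a, Finset.mem_erase.mpr ⟨hak, Finset.mem_univ a⟩, ha⟩
        · exact Finset.image_subset_image (Finset.erase_subset _ _)
      have hlt : (Finset.image cL Finset.univ).card < n := by
        rw [himg]
        calc (Finset.image cL (Finset.univ.erase k)).card
            ≤ (Finset.univ.erase k).card := Finset.card_image_le
          _ < Finset.univ.card := Finset.card_erase_lt_of_mem (Finset.mem_univ k)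
          _ = n := by simp
      have := Finset.card_le_card hsub
      rw [hBcard j] at this
      omega
    · push_neg at hcase
      have hdisj : ∀ i k : Fin n, i ≠ k → ∀ x, x ∈ A i → x ∈ A k → False := by
        intro i k hik x hxi hxk
        exact Finset.not_nonempty_iff_eq_empty.mpr (hcase i k hik) ⟨x, Finset.mem_inter.mpr ⟨hxi, hxk⟩⟩
      set S : Finset (Fin n → ℕ) := Fintype.piFinset A with hS
      have hScard : S.card = ∏ i, f i := by
        rw [hS, Fintype.card_piFinset]
        exact Finset.prod_congr rfl fun i _ => hAcard i
      set φ : (Fin n → ℕ) → Finset ℕ := fun c => Finset.image c Finset.univ with hφ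
      have hinj : Set.InjOn φ S := by
        intro c hc c' hc' heq
        simp only [Finset.mem_coe, hS, Fintype.mem_piFinset] at hc hc'
        funext i
        have hmm : c' i ∈ φ c := by
          rw [heq]; exact Finset.mem_image_of_mem _ (Finset.mem_univ i)
        obtain ⟨k, _, hk⟩ := Finset.mem_image.mp hmm
        by_cases hik : k = i
        · subst hik; exact hk
        · exact absurd (hdisj k i hik (c k) (hc k) (hk ▸ hc' i)) (fun h => h)
      set bad : Finset (Finset ℕ) := Finset.image (fun j => L (Sum.inr j)) Finset.univ
        with hbad
      have hbadcard : bad.card ≤ m := by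
        calc bad.card ≤ (Finset.univ : Finset (Fin m)).card := Finset.card_image_le
          _ = m := by simp
      have hcardimg : (S.image φ).card = ∏ i, f i := by
        rw [Finset.card_image_of_injOn hinj, hScard]
      have hnotsub : ¬ S.image φ ⊆ bad := by
        intro h
        have := Finset.card_le_card h
        omega
      obtain ⟨T, hT, hTbad⟩ := Finset.not_subset.mp hnotsub
      obtain ⟨c, hcS, hcT⟩ := Finset.mem_image.mp hT
      rw [Fintype.mem_piFinset] at hcS
      have hcinj : Function.Injective c := by
        intro a b hab
        by_contra hne
        exact hdisj a b hne (c a) (hcS a) (hab ▸ hcS b)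
      refine ⟨c, hcS, ?_⟩
      intro j hsub
      have himgcard : (Finset.image c Finset.univ).card = n := by
        rw [Finset.card_image_of_injective _ hcinj]; simp
      have heqT : L (Sum.inr j) = Finset.image c Finset.univ := by
        apply Finset.eq_of_subset_of_card_le hsub
        rw [himgcard, hBcard j]
      apply hTbad
      rw [← hcT]
      show Finset.image c Finset.univ ∈ bad
      rw [← heqT]
      exact Finset.mem_image_of_mem _ (Finset.mem_univ j)
  obtain ⟨cL, hcL, hcLB⟩ := key
  have hb : ∀ j, ∃ y, y ∈ L (Sum.inr j) ∧ y ∉ Finset.image cL Finset.univ := by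
    intro j
    obtain ⟨y, hy1, hy2⟩ := Finset.not_subset.mp (hcLB j)
    exact ⟨y, hy1, hy2⟩
  choose b hb1 hb2 using hb
  refine ⟨Sum.elim cL b, ?_, ?_⟩
  · rintro (i | j)
    · exact hcL i
    · exact hb1 j
  · rintro (i | j) (i' | j') hadj <;>
      simp only [completeBipartiteGraph, Sum.isLeft_inl, Sum.isRight_inr,
        Sum.isLeft_inr, Sum.isRight_inl, Sum.elim_inl, Sum.elim_inr] at hadj ⊢
    · simp at hadj
    · intro h
      exact hb2 j' (h ▸ Finset.mem_image_of_mem cL (Finset.mem_univ i))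
    · intro h
      exact hb2 j (h.symm ▸ Finset.mem_image_of_mem cL (Finset.mem_univ i'))
    · simp at hadj
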